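/- arXiv:1603.08325 — 13 statements merged into one kernel-verified Lean document; each statement's English description precedes it below -/
import Mathlib

section
/- Let I1, I2, V1, V2 ∈ ℂ with I1+V1 ≠ 0 and I2+V2 ≠ 0, and let (Ī1,Ī2,V̄1,V̄2) = χ1(I1,I2,V1,V2). Then Ī1+Ī2+V̄1+V̄2 = I1+I2+V1+V2; that is, the quantity c1 = I1+I2+V1+V2 is a conserved quantity of the periodic discrete Toda lattice χ1 of type A^(1)_1. -/
/-- The quantity `c₁ = I₁ + I₂ + V₁ + V₂` is a conserved quantity of the periodic
discrete Toda lattice `χ₁` of type `A₁⁽¹⁾`. -/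
theorem toda_conserves_c1 (I1 I2 V1 V2 : ℂ)
    (h1 : I1 + V1 ≠ 0) (h2 : I2 + V2 ≠ 0)
    (I1' I2' V1' V2' : ℂ)
    (hI1' : I1' = (I1 + V1) / (I2 + V2) * I2)
    (hI2' : I2' = (I2 + V2) / (I1 + V1) * I1)
    (hV1' : V1' = (I2 + V2) / (I1 + V1) * V1)
    (hV2' : V2' = (I1 + V1) / (I2 + V2) * V2) :
    I1' + I2' + V1' + V2' = I1 + I2 + V1 + V2 := by
  subst hI1' hI2' hV1' hV2'
  field_simp
  ring
end

section
/- Let I1, I2, V1, V2 ∈ ℂ with I1+V1 ≠ 0 and I2+V2 ≠ 0, and let (Ī1,Ī2,V̄1,V̄2) = χ1(I1,I2,V1,V2). Then Ī1·Ī2 = I1·I2 and V̄1·V̄2 = V1·V2; consequently c0 = I1I2+V1V2, c−1 = I1I2V1V2, a = I1I2−V1V2 and b = −V1V2 are all conserved quantities of the periodic discrete Toda lattice χ1 of type A^(1)_1. -/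
/-- `Ī₁·Ī₂ = I₁·I₂` and `V̄₁·V̄₂ = V₁·V₂` under the periodic discrete Toda lattice
`χ₁` of type `A₁⁽¹⁾`; consequently `c₀ = I₁I₂ + V₁V₂`, `c₋₁ = I₁I₂V₁V₂`,
`a = I₁I₂ − V₁V₂` and `b = −V₁V₂` are all conserved quantities. -/
theorem toda_conserves_c0_cm1_a_b (I1 I2 V1 V2 : ℂ)
    (h1 : I1 + V1 ≠ 0) (h2 : I2 + V2 ≠ 0)
    (I1' I2' V1' V2' : ℂ)
    (hI1' : I1' = (I1 + V1) / (I2 + V2) * I2)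
    (hI2' : I2' = (I2 + V2) / (I1 + V1) * I1)
    (hV1' : V1' = (I2 + V2) / (I1 + V1) * V1)
    (hV2' : V2' = (I1 + V1) / (I2 + V2) * V2) :
    I1' * I2' = I1 * I2 ∧ V1' * V2' = V1 * V2 ∧
    I1' * I2' + V1' * V2' = I1 * I2 + V1 * V2 ∧
    I1' * I2' * V1' * V2' = I1 * I2 * V1 * V2 ∧
    I1' * I2' - V1' * V2' = I1 * I2 - V1 * V2 ∧
    -(V1' * V2') = -(V1 * V2) := by
  subst hI1' hI2' hV1' hV2'
  have hII : (I1 + V1) / (I2 + V2) * I2 * ((I2 + V2) / (I1 + V1) * I1) = I1 * I2 := by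
    field_simp
  have hVV : (I2 + V2) / (I1 + V1) * V1 * ((I1 + V1) / (I2 + V2) * V2) = V1 * V2 := by
    field_simp
  refine ⟨hII, hVV, by rw [hII, hVV], by rw [hII, mul_assoc, hVV, ← mul_assoc], by rw [hII, hVV], by rw [hVV]⟩
end

section
/- Let I1, I2, V1, V2 ∈ ℂ with V2 ≠ 0, I1+V1 ≠ 0, I2+V2 ≠ 0, and set a = I1I2−V1V2, b = −V1V2, c1 = I1+I2+V1+V2. Then (i) the point Q̃ = (1/(V2(I1+V1)), 1/V2) satisfies b·x·y² + y² − b·c1·x²·y − c1·x·y + a·x² + x = 0, and (ii) if (Ī1,Ī2,V̄1,V̄2) = χ1(I1,I2,V1,V2), then 1/(V̄2(Ī2+V̄1)) = 1/(V2(I1+V1)) and 1/V̄2 = (I2+V2)/(V2(I1+V1)). In particular, the time evolution P̃ ↦ P̃' of the Toda lattice on the curve is realized by first moving along the horizontal line through P̃ = (1/(V2(I2+V1)), 1/V2) to Q̃, then along the vertical line through Q̃ to P̃' = (1/(V̄2(Ī2+V̄1)), 1/V̄2). -/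
/-- Geometric realization of the Toda time evolution on the transformed spectral
curve: (i) the point `Q̃ = (1/(V₂(I₁+V₁)), 1/V₂)` lies on the curve `γ̃₁`, and
(ii) the image point `P̃' = (1/(V̄₂(Ī₂+V̄₁)), 1/V̄₂)` has the same `x`-coordinate
as `Q̃` and `y`-coordinate `(I₂+V₂)/(V₂(I₁+V₁))`. -/
theorem toda_horizontal_vertical_switch (I1 I2 V1 V2 : ℂ)
    (hV2 : V2 ≠ 0) (h1 : I1 + V1 ≠ 0) (h2 : I2 + V2 ≠ 0)
    (a b c1 : ℂ)
    (ha : a = I1 * I2 - V1 * V2)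
    (hb : b = -(V1 * V2))
    (hc1 : c1 = I1 + I2 + V1 + V2)
    (I1' I2' V1' V2' : ℂ)
    (hI1' : I1' = (I1 + V1) / (I2 + V2) * I2)
    (hI2' : I2' = (I2 + V2) / (I1 + V1) * I1)
    (hV1' : V1' = (I2 + V2) / (I1 + V1) * V1)
    (hV2' : V2' = (I1 + V1) / (I2 + V2) * V2) :
    (b * (1 / (V2 * (I1 + V1))) * (1 / V2) ^ 2 + (1 / V2) ^ 2
      - b * c1 * (1 / (V2 * (I1 + V1))) ^ 2 * (1 / V2)
      - c1 * (1 / (V2 * (I1 + V1))) * (1 / V2)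
      + a * (1 / (V2 * (I1 + V1))) ^ 2 + 1 / (V2 * (I1 + V1)) = 0)
    ∧ 1 / (V2' * (I2' + V1')) = 1 / (V2 * (I1 + V1))
    ∧ 1 / V2' = (I2 + V2) / (V2 * (I1 + V1)) := by
  subst ha hb hc1 hI1' hI2' hV1' hV2'
  obtain ⟨s, rfl⟩ : ∃ s, I1 = s - V1 := ⟨I1 + V1, by ring⟩
  obtain ⟨t, rfl⟩ : ∃ t, I2 = t - V2 := ⟨I2 + V2, by ring⟩
  have hs : s - V1 + V1 = s := by ring
  have ht : t - V2 + V2 = t := by ring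
  rw [hs] at h1 ⊢
  rw [ht] at h2 ⊢
  refine ⟨?_, ?_, ?_⟩
  · field_simp
    ring_nf
  · rw [show t / s * (s - V1) + t / s * V1 = t / s * s by ring, div_mul_cancel₀ _ h1]
    rw [show s / t * V2 * t = V2 * s * (t / t) by ring, div_self h2, mul_one]
  · field_simp
end

section
/- Let I1, I2, V1, V2 ∈ ℂ with V2 ≠ 0, I1+V1 ≠ 0, I2+V2 ≠ 0 and I2+V1 ≠ 0, and let (Ī1,Ī2,V̄1,V̄2) = χ1(I1,I2,V1,V2) with V̄2 ≠ 0 and Ī2+V̄1 ≠ 0. Set a = I1I2−V1V2, b = −V1V2, x = 1/(V2(I2+V1)), y = 1/V2, x̄ = 1/(V̄2(Ī2+V̄1)), ȳ = 1/V̄2. Then, provided the denominators below are nonzero, x̄ = −(b·x+1)·y² / (b·(b·x+1)·y² − (a−b)·x) and ȳ = (a·x̄² + x̄) / ((b·x̄+1)·y). That is, the time evolution of the discrete Toda lattice χ1 of type A^(1)_1 on the transformed spectral curve is realized as the QRT map φ_TL. -/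
/-- The time evolution of the discrete Toda lattice `χ₁` of type `A₁⁽¹⁾` on the
transformed spectral curve is realized as the QRT map `φ_TL`. -/
theorem toda_evolution_is_QRT_map (I1 I2 V1 V2 : ℂ)
    (hV2 : V2 ≠ 0) (h1 : I1 + V1 ≠ 0) (h2 : I2 + V2 ≠ 0) (h3 : I2 + V1 ≠ 0)
    (I1' I2' V1' V2' : ℂ)
    (hI1' : I1' = (I1 + V1) / (I2 + V2) * I2)
    (hI2' : I2' = (I2 + V2) / (I1 + V1) * I1)
    (hV1' : V1' = (I2 + V2) / (I1 + V1) * V1)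
    (hV2' : V2' = (I1 + V1) / (I2 + V2) * V2)
    (hV2'ne : V2' ≠ 0) (h3' : I2' + V1' ≠ 0)
    (a b x y x' y' : ℂ)
    (ha : a = I1 * I2 - V1 * V2)
    (hb : b = -(V1 * V2))
    (hx : x = 1 / (V2 * (I2 + V1))) (hy : y = 1 / V2)
    (hx' : x' = 1 / (V2' * (I2' + V1'))) (hy' : y' = 1 / V2')
    (hden1 : b * (b * x + 1) * y ^ 2 - (a - b) * x ≠ 0)
    (hden2 : (b * x' + 1) * y ≠ 0) :
    x' = -((b * x + 1) * y ^ 2) / (b * (b * x + 1) * y ^ 2 - (a - b) * x)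
    ∧ y' = (a * x' ^ 2 + x') / ((b * x' + 1) * y) := by
  have hsum : I2' + V1' = I2 + V2 := by
    rw [hI2', hV1']; field_simp
  have hx'2 : x' = 1 / ((I1 + V1) * V2) := by
    rw [hx', hsum, hV2']; field_simp
  have hy'2 : y' = (I2 + V2) / ((I1 + V1) * V2) := by
    rw [hy', hV2']; field_simp
  have hd : b * (b * x + 1) * y ^ 2 - (a - b) * x
      = -(I2 * (I1 + V1)) / (V2 * (I2 + V1)) := by
    subst ha hb hx hy; field_simp; ring
  have hn : -((b * x + 1) * y ^ 2) = -(I2 / ((I2 + V1) * V2 ^ 2)) := by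
    subst hb hx hy; field_simp; ring
  have hI2ne : I2 ≠ 0 := by
    intro h; apply hden1; rw [hd, h]; simp
  have hI1ne : I1 ≠ 0 := by
    intro h
    apply hden2
    have hV1 : V1 ≠ 0 := by simpa [h] using h1
    rw [hx'2, hb, hy, h]
    field_simp
    simp [hV1]
  constructor
  · rw [hx'2, hd, hn]
    field_simp
  · rw [hy'2, hx'2, ha, hb, hy]
    rw [eq_div_iff]
    · field_simp; ring
    · rw [← hb, ← hy, ← hx'2]; exact hden2
end

section
/- Let a, b ∈ ℂ and let (x,y) ∈ ℂ² with x ≠ 0, y ≠ 0, b·x+1 ≠ 0; let (x̄,ȳ) = φ_TL(x,y) and assume x̄ ≠ 0, ȳ ≠ 0, b·x̄+1 ≠ 0 and that all denominators occurring in φ_TL are nonzero. Then λ(x̄,ȳ) = λ(x,y), where λ(x,y) = −(a−b)·x/((b·x+1)·y) − (b·x+1)·y/x + b·y − 1/y. Equivalently, setting λ = λ(x,y), both (x,y) and (x̄,ȳ) lie on the invariant curve b·x·y² + y² + b·λ·x²·y + λ·x·y + a·x² + x = 0 of the QRT map φ_TL. -/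
/-- `λ(x,y) = −(a−b)x/((bx+1)y) − (bx+1)y/x + by − 1/y` is a conserved quantity of
the QRT map `φ_TL`, and with `λ = λ(x,y)` both `(x,y)` and its image `(x̄,ȳ)` lie
on the invariant curve `bxy² + y² + bλx²y + λxy + ax² + x = 0`. -/
theorem QRT_TL_conserved_quantity (a b x y x' y' lam : ℂ)
    (hx : x ≠ 0) (hy : y ≠ 0) (hbx : b * x + 1 ≠ 0)
    (hden1 : b * (b * x + 1) * y ^ 2 - (a - b) * x ≠ 0)
    (hx' : x' = -((b * x + 1) * y ^ 2) / (b * (b * x + 1) * y ^ 2 - (a - b) * x))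
    (hy' : y' = (a * x' ^ 2 + x') / ((b * x' + 1) * y))
    (hx'ne : x' ≠ 0) (hy'ne : y' ≠ 0) (hbx' : b * x' + 1 ≠ 0)
    (hlam : lam = -(a - b) * x / ((b * x + 1) * y) - (b * x + 1) * y / x + b * y - 1 / y) :
    (-(a - b) * x' / ((b * x' + 1) * y') - (b * x' + 1) * y' / x' + b * y' - 1 / y' = lam)
    ∧ (b * x * y ^ 2 + y ^ 2 + b * lam * x ^ 2 * y + lam * x * y + a * x ^ 2 + x = 0)
    ∧ (b * x' * y' ^ 2 + y' ^ 2 + b * lam * x' ^ 2 * y' + lam * x' * y' + a * x' ^ 2 + x' = 0) := by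
    -- cleared-denominator versions of the hypotheses
  have hD : x' * (b*(b*x+1)*y^2 - (a-b)*x) = -((b*x+1)*y^2) := by
    rw [hx']; field_simp
    rw [mul_comm x (a-b), div_self hden1]
  have hYd : y' * ((b*x'+1)*y) = a*x'^2+x' := by
    rw [hy']; field_simp
    rw [mul_div_assoc, div_self (by rwa [mul_comm x' b]), mul_one]
  have hlamC : lam * ((b*x+1)*x*y) = -(a*x^2 + (b*x+1)*y^2 + x) := by
    rw [hlam]; field_simp; ring
  -- (x,y) lies on the curve
  have c2 : b * x * y ^ 2 + y ^ 2 + b * lam * x ^ 2 * y + lam * x * y + a * x ^ 2 + x = 0 := by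
    linear_combination hlamC
  -- Vieta product in x:  x * x' * (a + b*lam*y) = y^2
  have hV' : x*x'*(a+b*lam*y)*(b*x+1) = y^2*(b*x+1) := by
    linear_combination (-1)*hD + (b*x')*hlamC
  have hV : x*x'*(a+b*lam*y) = y^2 := by
    exact mul_right_cancel₀ hbx hV'
  -- (x', y) lies on the curve
  have hCx'' : (b * x' * y ^ 2 + y ^ 2 + b * lam * x' ^ 2 * y + lam * x' * y + a * x' ^ 2 + x') * x = 0 := by
    linear_combination (x' - x) * hV + x' * c2
  have hCx' : b * x' * y ^ 2 + y ^ 2 + b * lam * x' ^ 2 * y + lam * x' * y + a * x' ^ 2 + x' = 0 := by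
    have := mul_eq_zero.mp hCx''
    tauto
  -- Vieta sum in y:  y + y' + lam * x' = 0
  have hS' : (y + y' + lam*x') * ((b*x'+1)*y) = 0 * ((b*x'+1)*y) := by
    linear_combination hCx' + hYd
  have hS : y + y' + lam*x' = 0 := by
    exact mul_right_cancel₀ (mul_ne_zero hbx' hy) hS'
  -- (x', y') lies on the curve
  have c3' : (b * x' * y' ^ 2 + y' ^ 2 + b * lam * x' ^ 2 * y' + lam * x' * y' + a * x' ^ 2 + x') * y = 0 := by
    linear_combination (y' + lam*x') * hYd + (a*x'^2 + x') * hS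
  have c3 : b * x' * y' ^ 2 + y' ^ 2 + b * lam * x' ^ 2 * y' + lam * x' * y' + a * x' ^ 2 + x' = 0 := by
    have := mul_eq_zero.mp c3'
    tauto
  -- conserved quantity
  have c1 : -(a - b) * x' / ((b * x' + 1) * y') - (b * x' + 1) * y' / x' + b * y' - 1 / y' = lam := by
    have e1 : (-(a - b) * x' / ((b * x' + 1) * y') - (b * x' + 1) * y' / x' + b * y' - 1 / y') * ((b*x'+1)*x'*y') = -(a*x'^2 + (b*x'+1)*y'^2 + x') := by
      field_simp
      ring
    have e2 : lam * ((b*x'+1)*x'*y') = -(a*x'^2 + (b*x'+1)*y'^2 + x') := by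
      linear_combination c3
    exact mul_right_cancel₀ (mul_ne_zero (mul_ne_zero hbx' hx'ne) hy'ne) (e1.trans e2.symm)
  exact ⟨c1, c2, c3⟩
end

section
/- Let a, b ∈ ℂ and (x,y) ∈ ℂ² with x ≠ 0, y ≠ 0 and b·x+1 ≠ 0. Define I1 = (a−b)·x/((b·x+1)·y), I2 = (b·x+1)·y/x, V1 = −b·y, V2 = 1/y. Then I1·I2 − V1·V2 = a, −V1·V2 = b, 1/(V2·(I2+V1)) = x and 1/V2 = y. Hence the transformation (x,y) ↦ (I1,I2,V1,V2) is a right inverse of the map (I1,I2,V1,V2) ↦ (1/(V2(I2+V1)), 1/V2) that preserves the parameter values a = I1I2−V1V2 and b = −V1V2. -/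
/-- The transformation `(x,y) ↦ (I₁,I₂,V₁,V₂)` given by
`I₁ = (a−b)x/((bx+1)y)`, `I₂ = (bx+1)y/x`, `V₁ = −by`, `V₂ = 1/y`
is a right inverse of the eigenvector-type map
`(I₁,I₂,V₁,V₂) ↦ (1/(V₂(I₂+V₁)), 1/V₂)` preserving the parameters
`a = I₁I₂ − V₁V₂` and `b = −V₁V₂`. -/
theorem from_xy_to_IV_right_inverse (a b x y : ℂ)
    (hx : x ≠ 0) (hy : y ≠ 0) (hbx : b * x + 1 ≠ 0)
    (I1 I2 V1 V2 : ℂ)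
    (hI1 : I1 = (a - b) * x / ((b * x + 1) * y))
    (hI2 : I2 = (b * x + 1) * y / x)
    (hV1 : V1 = -(b * y))
    (hV2 : V2 = 1 / y) :
    I1 * I2 - V1 * V2 = a ∧ -(V1 * V2) = b ∧
    1 / (V2 * (I2 + V1)) = x ∧ 1 / V2 = y := by
  subst hI1 hI2 hV1 hV2
  refine ⟨?_, ?_, ?_, ?_⟩
  · field_simp
    ring
  · field_simp
  · have h : (b * x + 1) * y / x + -(b * y) = y / x := by
      field_simp; ring
    rw [h]
    field_simp
  · field_simp
end

section
/- Define sequences u_m, v_m ∈ ℤ² (exponent pairs of the principal coefficients y_{1;m}, y_{2;m} of the type A^(1)_1 cluster pattern in the tropical semifield Trop(y1,y2)) by u_0 = (1,0), v_0 = (0,1), and for each m ≥ 0: if m is even, u_{m+1} = −u_m and v_{m+1} = v_m + 2·min(u_m, (0,0)); if m is odd, u_{m+1} = u_m + 2·min(v_m, (0,0)) and v_{m+1} = −v_m, where min denotes componentwise minimum. Then for all m ≥ 2: if m is even, u_m = (−(m−1), −(m−2)) and v_m = (m−2, m−3); if m is odd, u_m = (m−2, m−3) and v_m = (−(m−1),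 −(m−2)). Equivalently, for m ≥ 2, y_{1;m} = y1^{−(m−1)} y2^{−(m−2)} and y_{2;m} = y1^{m−2} y2^{m−3} for m even, and y_{1;m} = y1^{m−2} y2^{m−3} and y_{2;m} = y1^{−(m−1)} y2^{−(m−2)} for m odd. -/
/-- The exponent pairs of the principal coefficients `y_{1;m}`, `y_{2;m}` of the
type `A₁⁽¹⁾` cluster pattern in the tropical semifield `Trop(y₁,y₂)`:
for `m ≥ 2` even, `y_{1;m} = y₁^{−(m−1)} y₂^{−(m−2)}` and `y_{2;m} = y₁^{m−2} y₂^{m−3}`,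
and for `m ≥ 2` odd the two are swapped. -/
theorem principal_coefficients_A11 (u v : ℕ → ℤ × ℤ)
    (hu0 : u 0 = (1, 0)) (hv0 : v 0 = (0, 1))
    (hrec : ∀ m : ℕ,
      (Even m → u (m + 1) = -u m ∧
        v (m + 1) = v m + (2 * min (u m).1 0, 2 * min (u m).2 0)) ∧
      (¬ Even m → u (m + 1) = u m + (2 * min (v m).1 0, 2 * min (v m).2 0) ∧
        v (m + 1) = -v m)) :
    ∀ m : ℕ, 2 ≤ m →
      (Even m → u m = (-((m : ℤ) - 1), -((m : ℤ) - 2)) ∧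
        v m = ((m : ℤ) - 2, (m : ℤ) - 3)) ∧
      (¬ Even m → u m = ((m : ℤ) - 2, (m : ℤ) - 3) ∧
        v m = (-((m : ℤ) - 1), -((m : ℤ) - 2))) := by
  have h1u : u 1 = (-1, 0) := by
    have := (hrec 0).1 Even.zero
    rw [this.1, hu0]; decide
  have h1v : v 1 = (0, 1) := by
    have := (hrec 0).1 Even.zero
    rw [this.2, hv0, hu0]; decide
  have h2u : u 2 = (-1, 0) := by
    have := (hrec 1).2 (by decide)
    rw [this.1, h1v, h1u]; decide
  have h2v : v 2 = (0, -1) := by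
    have := (hrec 1).2 (by decide)
    rw [this.2, h1v]; decide
  intro m hm
  induction m, hm using Nat.le_induction with
  | base =>
    constructor
    · intro _; exact ⟨by rw [h2u]; norm_num, by rw [h2v]; norm_num⟩
    · intro h; exact absurd (by decide) h
  | succ n hn ih =>
    have hn1 : (1 : ℤ) ≤ (n : ℤ) - 1 := by
      have : (2 : ℤ) ≤ (n : ℤ) := by exact_mod_cast hn
      linarith
    by_cases hE : Even n
    · have ⟨hun, hvn⟩ := ih.1 hE
      have ⟨hu', hv'⟩ := (hrec n).1 hE
      have hne : ¬ Even (n + 1) := by simp [Nat.even_add_one, hE]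
      refine ⟨fun h => absurd h hne, fun _ => ⟨?_, ?_⟩⟩
      · rw [hu', hun]; simp only [Prod.neg_mk, Prod.mk.injEq]; constructor <;> (push_cast; ring)
      · rw [hv', hvn, hun]
        have h1 : min (-((n : ℤ) - 1)) 0 = -((n : ℤ) - 1) := by
          rw [min_eq_left]; linarith
        have h2 : min (-((n : ℤ) - 2)) 0 = -((n : ℤ) - 2) := by
          rw [min_eq_left]; linarith
        simp only [h1, h2, Prod.mk_add_mk, Prod.mk.injEq]
        constructor <;> (push_cast; ring)
    · have ⟨hun, hvn⟩ := ih.2 hE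
      have ⟨hu', hv'⟩ := (hrec n).2 hE
      have hne : Even (n + 1) := by simp [Nat.even_add_one, hE]
      refine ⟨fun _ => ⟨?_, ?_⟩, fun h => absurd hne h⟩
      · rw [hu', hun, hvn]
        have h1 : min (-((n : ℤ) - 1)) 0 = -((n : ℤ) - 1) := by
          rw [min_eq_left]; linarith
        have h2 : min (-((n : ℤ) - 2)) 0 = -((n : ℤ) - 2) := by
          rw [min_eq_left]; linarith
        simp only [h1, h2, Prod.mk_add_mk, Prod.mk.injEq]
        constructor <;> (push_cast; ring)
      · rw [hv', hvn]; simp only [Prod.neg_mk, Prod.mk.injEq]; constructor <;> (push_cast; ring)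
end

section
/- Let y1, y2, x1, x2 ∈ ℂ be nonzero, and let x_{1;m}, x_{2;m} (m ≥ 2, m even resp. as indicated) be determined by the type A^(1)_1 exchange relations: x_{1;2} = (y1·x2² + 1)/x1, x_{2;2} = (y2·(x_{1;2})² + 1)/x2, and for even m ≥ 2: x_{1;m+2} = ((x_{2;m})² + y1^{m−1}·y2^{m−2})/x_{1;m}, x_{2;m+2} = ((x_{1;m+2})² + y1^{m}·y2^{m−1})/x_{2;m}, assuming all terms are nonzero. Define z⁰ = x1/(y1·y2²), w⁰ = x2/y2, and for t ≥ 1, zᵗ = x_{1;2t}/(y1·y2)ᵗ and wᵗ = x_{2;2t}/(y1·y2)ᵗ. Then for every t ≥ 0, z^{t+1} = (y1·y2²·(wᵗ)² + 1)/(y1²·y2³·zᵗ) and w^{t+1} = (y1²·y2³·(z^{t+1})² + 1)/(y1·y2²·wᵗ). That is, the composition μ2∘μ1 of seed mutations in the cluster algebra of type A^(1)_1 with principal coefficients induces the QRT map φ_CA. -/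
private lemma qrt_aux1 (y1 y2 a b : ℂ) (hy1 : y1 ≠ 0) (hy2 : y2 ≠ 0) (ha : a ≠ 0)
    (hb : b ≠ 0) (k : ℕ) :
    (b ^ 2 + y1 ^ (2 * k + 1) * y2 ^ (2 * k)) / (a * (y1 * y2) ^ (k + 2))
      = (y1 * y2 ^ 2 * (b / (y1 * y2) ^ (k + 1)) ^ 2 + 1)
        / (y1 ^ 2 * y2 ^ 3 * (a / (y1 * y2) ^ (k + 1))) := by
  have hyy : (y1 * y2 : ℂ) ≠ 0 := mul_ne_zero hy1 hy2
  rw [div_eq_div_iff (by simp [ha, hb, hy1, hy2, pow_ne_zero]) (by simp [ha, hb, hy1, hy2, pow_ne_zero])]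
  field_simp
  ring

private lemma qrt_aux2 (y1 y2 a b : ℂ) (hy1 : y1 ≠ 0) (hy2 : y2 ≠ 0) (ha : a ≠ 0)
    (hb : b ≠ 0) (k : ℕ) :
    ((b ^ 2 + y1 ^ (2 * k + 1) * y2 ^ (2 * k)) ^ 2
        + y1 ^ (2 * (k + 1)) * y2 ^ (2 * k + 1) * a ^ 2) / (a ^ 2 * b * (y1 * y2) ^ (k + 2))
      = (y1 ^ 2 * y2 ^ 3 * ((b ^ 2 + y1 ^ (2 * k + 1) * y2 ^ (2 * k))
            / (a * (y1 * y2) ^ (k + 2))) ^ 2 + 1)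
        / (y1 * y2 ^ 2 * (b / (y1 * y2) ^ (k + 1))) := by
  have hyy : (y1 * y2 : ℂ) ≠ 0 := mul_ne_zero hy1 hy2
  rw [div_eq_div_iff (by simp [ha, hb, hy1, hy2, pow_ne_zero]) (by simp [ha, hb, hy1, hy2, pow_ne_zero])]
  field_simp
  ring

private lemma qrt_aux0a (y1 y2 x1 x2 : ℂ) (hy1 : y1 ≠ 0) (hy2 : y2 ≠ 0) (hx1 : x1 ≠ 0)
    (hx2 : x2 ≠ 0) :
    (y1 * x2 ^ 2 + 1) / (y1 * y2 * x1)
      = (y1 * y2 ^ 2 * (x2 / y2) ^ 2 + 1) / (y1 ^ 2 * y2 ^ 3 * (x1 / (y1 * y2 ^ 2))) := by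
  rw [div_eq_div_iff (by simp [hy1, hy2, hx1]) (by simp [hy1, hy2, hx1, hx2])]
  field_simp

private lemma qrt_aux0b (y1 y2 x1 x2 : ℂ) (hy1 : y1 ≠ 0) (hy2 : y2 ≠ 0) (hx1 : x1 ≠ 0)
    (hx2 : x2 ≠ 0) :
    (y2 * (y1 * x2 ^ 2 + 1) ^ 2 + x1 ^ 2) / (y1 * y2 * x2 * x1 ^ 2)
      = (y1 ^ 2 * y2 ^ 3 * ((y1 * x2 ^ 2 + 1) / (y1 * y2 * x1)) ^ 2 + 1)
        / (y1 * y2 ^ 2 * (x2 / y2)) := by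
  rw [div_eq_div_iff (by simp [hy1, hy2, hx1, hx2]) (by simp [hy1, hy2, hx1, hx2])]
  field_simp

/-- The composition `μ₂ ∘ μ₁` of seed mutations in the cluster algebra of type
`A₁⁽¹⁾` with principal coefficients induces the QRT map `φ_CA`:
with `zᵗ = x_{1;2t}/(y₁y₂)ᵗ`, `wᵗ = x_{2;2t}/(y₁y₂)ᵗ` (and `z⁰ = x₁/(y₁y₂²)`,
`w⁰ = x₂/y₂`), one has `z^{t+1} = (y₁y₂²(wᵗ)² + 1)/(y₁²y₂³ zᵗ)` and
`w^{t+1} = (y₁²y₂³(z^{t+1})² + 1)/(y₁y₂² wᵗ)`. -/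
theorem mutations_A11_induce_QRT_map (y1 y2 x1 x2 : ℂ)
    (hy1 : y1 ≠ 0) (hy2 : y2 ≠ 0) (hx1 : x1 ≠ 0) (hx2 : x2 ≠ 0)
    (X1 X2 : ℕ → ℂ)
    (hX12 : X1 2 = (y1 * x2 ^ 2 + 1) / x1)
    (hX22 : X2 2 = (y2 * (X1 2) ^ 2 + 1) / x2)
    (hrec : ∀ m : ℕ, 2 ≤ m → Even m →
      X1 (m + 2) = ((X2 m) ^ 2 + y1 ^ (m - 1) * y2 ^ (m - 2)) / X1 m ∧
      X2 (m + 2) = ((X1 (m + 2)) ^ 2 + y1 ^ m * y2 ^ (m - 1)) / X2 m)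
    (hnz : ∀ m : ℕ, 2 ≤ m → Even m → X1 m ≠ 0 ∧ X2 m ≠ 0)
    (z w : ℕ → ℂ)
    (hz0 : z 0 = x1 / (y1 * y2 ^ 2)) (hw0 : w 0 = x2 / y2)
    (hz : ∀ t : ℕ, 1 ≤ t → z t = X1 (2 * t) / (y1 * y2) ^ t)
    (hw : ∀ t : ℕ, 1 ≤ t → w t = X2 (2 * t) / (y1 * y2) ^ t) :
    ∀ t : ℕ,
      z (t + 1) = (y1 * y2 ^ 2 * (w t) ^ 2 + 1) / (y1 ^ 2 * y2 ^ 3 * z t) ∧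
      w (t + 1) = (y1 ^ 2 * y2 ^ 3 * (z (t + 1)) ^ 2 + 1) / (y1 * y2 ^ 2 * w t) := by
  intro t
  have hyy : (y1 * y2 : ℂ) ≠ 0 := mul_ne_zero hy1 hy2
  match t with
  | 0 =>
    have h1 := hz 1 le_rfl
    have h2 := hw 1 le_rfl
    norm_num at h1 h2
    have hz1v : z 1 = (y1 * x2 ^ 2 + 1) / (y1 * y2 * x1) := by
      rw [h1, hX12, div_div, mul_comm x1]
    have hw1v : w 1 = (y2 * (y1 * x2 ^ 2 + 1) ^ 2 + x1 ^ 2) / (y1 * y2 * x2 * x1 ^ 2) := by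
      rw [h2, hX22, hX12]; field_simp; try ring
      try exact Or.inl trivial
    refine ⟨?_, ?_⟩
    · rw [hz1v, hw0, hz0]; exact qrt_aux0a y1 y2 x1 x2 hy1 hy2 hx1 hx2
    · rw [hw1v, hz1v, hw0]; exact qrt_aux0b y1 y2 x1 x2 hy1 hy2 hx1 hx2
  | Nat.succ k =>
    have hm2 : 2 ≤ 2 * (k + 1) := by omega
    have hme : Even (2 * (k + 1)) := even_two_mul _
    have hX1ne : X1 (2 * (k + 1)) ≠ 0 := (hnz _ hm2 hme).1
    have hX2ne : X2 (2 * (k + 1)) ≠ 0 := (hnz _ hm2 hme).2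
    obtain ⟨h1, h2⟩ := hrec (2 * (k + 1)) hm2 hme
    have e1 : 2 * (k + 1) + 2 = 2 * (k + 2) := by ring
    have e2 : 2 * (k + 1) - 1 = 2 * k + 1 := by omega
    have e3 : 2 * (k + 1) - 2 = 2 * k := by omega
    rw [e1] at h1 h2
    rw [e2, e3] at h1
    rw [e2] at h2
    have hz1 := hz (k + 1) (by omega)
    have hz2 := hz (k + 2) (by omega)
    have hw1 := hw (k + 1) (by omega)
    have hw2 := hw (k + 2) (by omega)
    have hzv : z (k + 2) = (X2 (2 * (k + 1)) ^ 2 + y1 ^ (2 * k + 1) * y2 ^ (2 * k))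
        / (X1 (2 * (k + 1)) * (y1 * y2) ^ (k + 2)) := by
      rw [hz2, h1]; field_simp; try ring
    have hwv : w (k + 2) = ((X2 (2 * (k + 1)) ^ 2 + y1 ^ (2 * k + 1) * y2 ^ (2 * k)) ^ 2
        + y1 ^ (2 * (k + 1)) * y2 ^ (2 * k + 1) * X1 (2 * (k + 1)) ^ 2)
        / (X1 (2 * (k + 1)) ^ 2 * X2 (2 * (k + 1)) * (y1 * y2) ^ (k + 2)) := by
      rw [hw2, h2, h1]; field_simp; try ring
    have hk2 : k.succ + 1 = k + 2 := rfl
    rw [hk2]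
    refine ⟨?_, ?_⟩
    · rw [hzv, hz1, hw1]
      exact qrt_aux1 y1 y2 _ _ hy1 hy2 hX1ne hX2ne k
    · rw [hwv, hzv, hw1]
      exact qrt_aux2 y1 y2 _ _ hy1 hy2 hX1ne hX2ne k
end

section
/- Let y1, y2 ∈ ℂ be nonzero, let z, w ∈ ℂ be nonzero, let (z',w') = φ_CA(z,w), and assume z' ≠ 0 and w' ≠ 0. Then (y1·y2²·w'² + y1²·y2³·z'² + 1)/(z'·w') = (y1·y2²·w² + y1²·y2³·z² + 1)/(z·w); that is, λ(z,w) = −(y1·y2²·w² + y1²·y2³·z² + 1)/(z·w) is a conserved quantity of the QRT map φ_CA, and its invariant curve is y1·y2²·w² + λ·z·w + y1²·y2³·z² + 1 = 0. -/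
/-- `λ(z,w) = −(y₁y₂²w² + y₁²y₂³z² + 1)/(zw)` is a conserved quantity of the QRT
map `φ_CA`, and its invariant curve is `y₁y₂²w² + λzw + y₁²y₂³z² + 1 = 0`. -/
theorem QRT_CA_conserved_quantity (y1 y2 z w z' w' : ℂ)
    (hy1 : y1 ≠ 0) (hy2 : y2 ≠ 0) (hz : z ≠ 0) (hw : w ≠ 0)
    (hz' : z' = (y1 * y2 ^ 2 * w ^ 2 + 1) / (y1 ^ 2 * y2 ^ 3 * z))
    (hw' : w' = (y1 ^ 2 * y2 ^ 3 * z' ^ 2 + 1) / (y1 * y2 ^ 2 * w))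
    (hz'ne : z' ≠ 0) (hw'ne : w' ≠ 0) :
    ((y1 * y2 ^ 2 * w' ^ 2 + y1 ^ 2 * y2 ^ 3 * z' ^ 2 + 1) / (z' * w')
      = (y1 * y2 ^ 2 * w ^ 2 + y1 ^ 2 * y2 ^ 3 * z ^ 2 + 1) / (z * w))
    ∧ (∀ lam : ℂ, lam = -((y1 * y2 ^ 2 * w ^ 2 + y1 ^ 2 * y2 ^ 3 * z ^ 2 + 1) / (z * w)) →
      y1 * y2 ^ 2 * w ^ 2 + lam * z * w + y1 ^ 2 * y2 ^ 3 * z ^ 2 + 1 = 0 ∧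
      y1 * y2 ^ 2 * w' ^ 2 + lam * z' * w' + y1 ^ 2 * y2 ^ 3 * z' ^ 2 + 1 = 0) := by
  have e1 : y1 ^ 2 * y2 ^ 3 * z * z' = y1 * y2 ^ 2 * w ^ 2 + 1 := by
    rw [hz']; field_simp
  have e2 : y1 * y2 ^ 2 * w * w' = y1 ^ 2 * y2 ^ 3 * z' ^ 2 + 1 := by
    rw [hw']; field_simp
  have key : (y1 * y2 ^ 2 * w' ^ 2 + y1 ^ 2 * y2 ^ 3 * z' ^ 2 + 1) / (z' * w')
      = (y1 * y2 ^ 2 * w ^ 2 + y1 ^ 2 * y2 ^ 3 * z ^ 2 + 1) / (z * w) := by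
    field_simp
    linear_combination (z' * w' - z * w') * e1 + (z * w' - z * w) * e2
  refine ⟨key, fun lam hlam => ⟨?_, ?_⟩⟩
  · rw [hlam]; field_simp; ring
  · rw [hlam, ← key]; field_simp; ring
end

section
/- Let y1, y2, x1, x2 ∈ ℂ be nonzero and let x_{1;2t}, x_{2;2t} (t ≥ 1) be determined by the type A^(1)_1 exchange relations: x_{1;2} = (y1·x2² + 1)/x1, x_{2;2} = (y2·(x_{1;2})² + 1)/x2, and for even m ≥ 2: x_{1;m+2} = ((x_{2;m})² + y1^{m−1}·y2^{m−2})/x_{1;m}, x_{2;m+2} = ((x_{1;m+2})² + y1^{m}·y2^{m−1})/x_{2;m}, assuming all terms are nonzero. Then for every t ≥ 1, (y1·y2²·(x_{2;2t})² + y1²·y2³·(x_{1;2t})² + (y1·y2)^{2t}) / (x_{1;2t}·x_{2;2t}) = (y1·y2²·x1² + y1²·y2³·x2² + y1·y2³) / (x1·x2). In particular, this rational expression in the later cluster variables is independent of t and is a Laurent polynomial in the initial cluster variables x1, x2. -/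
private lemma step_A11 (u v a b c d P : ℂ) (ha : a ≠ 0) (hb : b ≠ 0)
    (hc : c ≠ 0) (hd : d ≠ 0)
    (hcd : c = (b ^ 2 + P) / a) (hdd : d = (c ^ 2 + u * v * P) / b) :
    (u * v ^ 2 * d ^ 2 + u ^ 2 * v ^ 3 * c ^ 2 + (u * v) ^ 2 * (u * v ^ 2 * P)) / (c * d)
      = (u * v ^ 2 * b ^ 2 + u ^ 2 * v ^ 3 * a ^ 2 + u * v ^ 2 * P) / (a * b) := by
  have h1 : c * a = b ^ 2 + P := by rw [hcd]; field_simp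
  have h2 : d * b = c ^ 2 + u * v * P := by rw [hdd]; field_simp
  rw [div_eq_div_iff (mul_ne_zero hc hd) (mul_ne_zero ha hb)]
  linear_combination (u * v ^ 2 * c * d - u ^ 2 * v ^ 3 * a * d) * h1 +
    (u * v ^ 2 * a * d - u ^ 2 * v ^ 3 * a * b) * h2

/-- Laurent-phenomenon invariant of the seed mutations in the cluster algebra of
type `A₁⁽¹⁾`: for every `t ≥ 1`,
`(y₁y₂²x_{2;2t}² + y₁²y₂³x_{1;2t}² + (y₁y₂)^{2t})/(x_{1;2t}x_{2;2t})`
equals the Laurent polynomial `(y₁y₂²x₁² + y₁²y₂³x₂² + y₁y₂³)/(x₁x₂)` in the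
initial cluster variables. -/
theorem mutation_invariant_A11 (y1 y2 x1 x2 : ℂ)
    (hy1 : y1 ≠ 0) (hy2 : y2 ≠ 0) (hx1 : x1 ≠ 0) (hx2 : x2 ≠ 0)
    (X1 X2 : ℕ → ℂ)
    (hX12 : X1 2 = (y1 * x2 ^ 2 + 1) / x1)
    (hX22 : X2 2 = (y2 * (X1 2) ^ 2 + 1) / x2)
    (hrec : ∀ m : ℕ, 2 ≤ m → Even m →
      X1 (m + 2) = ((X2 m) ^ 2 + y1 ^ (m - 1) * y2 ^ (m - 2)) / X1 m ∧
      X2 (m + 2) = ((X1 (m + 2)) ^ 2 + y1 ^ m * y2 ^ (m - 1)) / X2 m)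
    (hnz : ∀ m : ℕ, 2 ≤ m → Even m → X1 m ≠ 0 ∧ X2 m ≠ 0) :
    ∀ t : ℕ, 1 ≤ t →
      (y1 * y2 ^ 2 * (X2 (2 * t)) ^ 2 + y1 ^ 2 * y2 ^ 3 * (X1 (2 * t)) ^ 2
          + (y1 * y2) ^ (2 * t)) / (X1 (2 * t) * X2 (2 * t))
        = (y1 * y2 ^ 2 * x1 ^ 2 + y1 ^ 2 * y2 ^ 3 * x2 ^ 2 + y1 * y2 ^ 3) / (x1 * x2) := by
  have key : ∀ k : ℕ,
      (y1 * y2 ^ 2 * (X2 (2 * (k + 1))) ^ 2 + y1 ^ 2 * y2 ^ 3 * (X1 (2 * (k + 1))) ^ 2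
          + (y1 * y2) ^ (2 * (k + 1))) / (X1 (2 * (k + 1)) * X2 (2 * (k + 1)))
        = (y1 * y2 ^ 2 * x1 ^ 2 + y1 ^ 2 * y2 ^ 3 * x2 ^ 2 + y1 * y2 ^ 3) / (x1 * x2) := by
    intro k
    induction k with
    | zero =>
        norm_num
        obtain ⟨hA, hB⟩ := hnz 2 (by norm_num) (by decide)
        have h1 : X1 2 * x1 = y1 * x2 ^ 2 + 1 := by rw [hX12]; field_simp
        have h2 : X2 2 * x2 = y2 * (X1 2) ^ 2 + 1 := by rw [hX22]; field_simp
        rw [div_eq_div_iff (mul_ne_zero hA hB) (mul_ne_zero hx1 hx2)]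
        linear_combination (y1 * y2 ^ 3 * X1 2 * X2 2 - y1 * y2 ^ 2 * x1 * X2 2) * h1 +
          (y1 * y2 ^ 2 * X2 2 * x1 - y1 ^ 2 * y2 ^ 2 * x1 * x2) * h2
    | succ k ih =>
        have hm : 2 ≤ 2 * (k + 1) := by omega
        have hev : Even (2 * (k + 1)) := ⟨k + 1, by ring⟩
        obtain ⟨ha, hb⟩ := hnz (2 * (k + 1)) hm hev
        have hm2 : 2 ≤ 2 * (k + 1) + 2 := by omega
        have hev2 : Even (2 * (k + 1) + 2) := ⟨k + 2, by ring⟩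
        obtain ⟨hc, hd⟩ := hnz (2 * (k + 1) + 2) hm2 hev2
        obtain ⟨h1, h2⟩ := hrec (2 * (k + 1)) hm hev
        have e1 : 2 * (k + 1) - 1 = 2 * k + 1 := by omega
        have e2 : 2 * (k + 1) - 2 = 2 * k := by omega
        rw [e1, e2] at h1
        rw [e1] at h2
        have e3 : 2 * (k + 1 + 1) = 2 * (k + 1) + 2 := by ring
        rw [e3]
        have h2' : X2 (2 * (k + 1) + 2) =
            ((X1 (2 * (k + 1) + 2)) ^ 2 + y1 * y2 * (y1 ^ (2 * k + 1) * y2 ^ (2 * k)))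
              / X2 (2 * (k + 1)) := by
          rw [h2]
          congr 1
          ring
        have hstep := step_A11 y1 y2 (X1 (2 * (k + 1))) (X2 (2 * (k + 1)))
          (X1 (2 * (k + 1) + 2)) (X2 (2 * (k + 1) + 2)) (y1 ^ (2 * k + 1) * y2 ^ (2 * k))
          ha hb hc hd h1 h2'
        have p1 : (y1 * y2) ^ (2 * (k + 1) + 2)
            = (y1 * y2) ^ 2 * (y1 * y2 ^ 2 * (y1 ^ (2 * k + 1) * y2 ^ (2 * k))) := by ring
        have p2 : (y1 * y2) ^ (2 * (k + 1))
            = y1 * y2 ^ 2 * (y1 ^ (2 * k + 1) * y2 ^ (2 * k)) := by ring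
        rw [p1, hstep, ← p2]
        exact ih
  intro t ht
  obtain ⟨k, rfl⟩ : ∃ k, t = k + 1 := ⟨t - 1, by omega⟩
  exact key k
end

section
/- Let a, ξ, η ∈ ℂ with a ≠ 0 and ξ ≠ 0. Let (x^{⟨m⟩}, y^{⟨m⟩}) denote the m-th iterate of the map φ_TL^{b=0} starting from (ξ,η), where φ_TL^{b=0}(x,y) = (x',y') with x' = y²/(a·x) and y' = (a·x'² + x')/y; and let (x^{(n)}, y^{(n)}) denote the n-th iterate of the map φ_CA^{ξ} starting from (ξ,η), where φ_CA^{ξ}(z,w) = (z',w') with z' = (w²+ξ)/(a·z) and w' = (a·z'² + ξ)/w (this is the QRT map φ_CA with parameters y1 = a²ξ and y2 = 1/(aξ)). Assume all denominators occurring along both orbits are nonzero. Then for every n ≥ 0: ξ·x^{⟨2n⟩} = (x^{(n)})² and ξ·y^{⟨2n⟩} = x^{(n)}·y^{(n)}; that is, ξ·φ_TL^{2n}(ξ,η) = x^{(n)}·φ_CA^{n}(ξ,η). -/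
/-- Main theorem relating the two QRT maps: with `b = 0`, `y₁ = a²ξ`, `y₂ = 1/(aξ)`,
one has `ξ·φ_TL^{2n}(ξ,η) = x⁽ⁿ⁾·φ_CA^{n}(ξ,η)` for all `n ≥ 0`, i.e.
`ξ·x^{⟨2n⟩} = (x⁽ⁿ⁾)²` and `ξ·y^{⟨2n⟩} = x⁽ⁿ⁾·y⁽ⁿ⁾`. -/
theorem QRT_TL_vs_QRT_CA (a xi eta : ℂ) (ha : a ≠ 0) (hxi : xi ≠ 0)
    (X Y Z W : ℕ → ℂ)
    (hX0 : X 0 = xi) (hY0 : Y 0 = eta)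
    (hXY : ∀ m : ℕ, X (m + 1) = (Y m) ^ 2 / (a * X m) ∧
      Y (m + 1) = (a * (X (m + 1)) ^ 2 + X (m + 1)) / Y m)
    (hZ0 : Z 0 = xi) (hW0 : W 0 = eta)
    (hZW : ∀ n : ℕ, Z (n + 1) = ((W n) ^ 2 + xi) / (a * Z n) ∧
      W (n + 1) = (a * (Z (n + 1)) ^ 2 + xi) / W n)
    (hXYnz : ∀ m : ℕ, X m ≠ 0 ∧ Y m ≠ 0)
    (hZWnz : ∀ n : ℕ, Z n ≠ 0 ∧ W n ≠ 0) :
    ∀ n : ℕ, xi * X (2 * n) = (Z n) ^ 2 ∧ xi * Y (2 * n) = Z n * W n := by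
  intro n
  induction n with
  | zero => simp [hX0, hY0, hZ0, hW0, sq]
  | succ n ih =>
    obtain ⟨ih1, ih2⟩ := ih
    obtain ⟨hXnz, hYnz⟩ := hXYnz (2*n)
    obtain ⟨hXnz1, hYnz1⟩ := hXYnz (2*n+1)
    obtain ⟨hZnz, hWnz⟩ := hZWnz n
    obtain ⟨hZnz1, hWnz1⟩ := hZWnz (n+1)
    have e1 := (hXY (2*n)).1
    have e2 := (hXY (2*n)).2
    have e3 := (hXY (2*n+1)).1
    have e4 := (hXY (2*n+1)).2
    have f1 := (hZW n).1
    have hXv : X (2*n) = Z n ^ 2 / xi := by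
      field_simp; linear_combination ih1
    have hYv : Y (2*n) = Z n * W n / xi := by
      field_simp; linear_combination ih2
    have hA : X (2*n+1) = W n ^ 2 / (a * xi) := by
      rw [e1, hXv, hYv]
      field_simp
    have hB : Y (2*n+1) = W n * Z (n+1) / xi := by
      rw [e2, hA, hYv, f1]
      field_simp
    have hC : X (2*n+2) = Z (n+1) ^ 2 / xi := by
      rw [e3, hA, hB]
      field_simp
    have hD : Y (2*n+2) = Z (n+1) * W (n+1) / xi := by
      rw [e4, hC, hB, (hZW n).2]
      field_simp
    have h2 : 2 * (n + 1) = 2*n + 2 := by ring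
    rw [h2, hC, hD]
    constructor <;> field_simp
end

section
/- Let z, w ∈ ℂ be nonzero, let (z',w') = φ with z' = (w²+1)/z and w' = (z'²+1)/w, and assume z' ≠ 0 and w' ≠ 0. Then (w'² + z'² + 1)/(z'·w') = (w² + z² + 1)/(z·w); that is, λ(z,w) = −(w² + z² + 1)/(z·w) is a conserved quantity of the QRT map arising from the seed mutations of the cluster algebra of type A^(1)_1 (with trivial coefficients), and its invariant curve is w² + λ·z·w + z² + 1 = 0. -/
/-- `λ(z,w) = −(w² + z² + 1)/(zw)` is a conserved quantity of the QRT map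
`(z,w) ↦ ((w²+1)/z, (z'²+1)/w)` arising from the seed mutations of the cluster
algebra of type `A₁⁽¹⁾` with trivial coefficients, with invariant curve
`w² + λzw + z² + 1 = 0`. -/
theorem QRT_A11_trivial_coeff_conserved (z w z' w' : ℂ)
    (hz : z ≠ 0) (hw : w ≠ 0)
    (hz' : z' = (w ^ 2 + 1) / z) (hw' : w' = (z' ^ 2 + 1) / w)
    (hz'ne : z' ≠ 0) (hw'ne : w' ≠ 0) :
    ((w' ^ 2 + z' ^ 2 + 1) / (z' * w') = (w ^ 2 + z ^ 2 + 1) / (z * w))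
    ∧ (∀ lam : ℂ, lam = -((w ^ 2 + z ^ 2 + 1) / (z * w)) →
        w ^ 2 + lam * z * w + z ^ 2 + 1 = 0 ∧
        w' ^ 2 + lam * z' * w' + z' ^ 2 + 1 = 0) := by
  have e1 : z * z' = w ^ 2 + 1 := by
    rw [hz']; field_simp
  have e2 : w * w' = z' ^ 2 + 1 := by
    rw [hw']; field_simp
  have key : w * (w' + w) = z' * (z' + z) := by linear_combination e2 - e1
  have heq : (w' ^ 2 + z' ^ 2 + 1) / (z' * w') = (w ^ 2 + z ^ 2 + 1) / (z * w) := by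
    rw [div_eq_div_iff (mul_ne_zero hz'ne hw'ne) (mul_ne_zero hz hw)]
    linear_combination (-(z * w)) * e2 + w' * z' * e1 + w' * z * key
  refine ⟨heq, fun lam hlam => ⟨?_, ?_⟩⟩
  · rw [hlam]; field_simp; ring
  · rw [hlam, ← heq]; field_simp; ring
end

section
/- Let z, w ∈ ℂ be nonzero, let (z',w') = φ_{A2}(z,w) with z' = (w+1)/z and w' = (z'+1)/w, and assume z' ≠ 0 and w' ≠ 0. Then ((z'+1)·w'² + (z'²+2)·w' + (z'+1)²)/(z'·w') = ((z+1)·w² + (z²+2)·w + (z+1)²)/(z·w); that is, λ(z,w) = −((z+1)·w² + (z²+2)·w + (z+1)²)/(z·w) is a conserved quantity of φ_{A2}, and its invariant curve is the cubic (z+1)·w² + (z² + λ·z + 2)·w + (z+1)² = 0. -/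
/-- `λ(z,w) = −((z+1)w² + (z²+2)w + (z+1)²)/(zw)` is a conserved quantity of the
QRT map `φ_{A₂} : (z,w) ↦ ((w+1)/z, (z'+1)/w)`, with invariant cubic curve
`(z+1)w² + (z² + λz + 2)w + (z+1)² = 0`. -/
theorem QRT_A2_conserved_quantity (z w z' w' : ℂ)
    (hz : z ≠ 0) (hw : w ≠ 0)
    (hz' : z' = (w + 1) / z) (hw' : w' = (z' + 1) / w)
    (hz'ne : z' ≠ 0) (hw'ne : w' ≠ 0) :
    (((z' + 1) * w' ^ 2 + (z' ^ 2 + 2) * w' + (z' + 1) ^ 2) / (z' * w')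
      = ((z + 1) * w ^ 2 + (z ^ 2 + 2) * w + (z + 1) ^ 2) / (z * w))
    ∧ (∀ lam : ℂ, lam = -(((z + 1) * w ^ 2 + (z ^ 2 + 2) * w + (z + 1) ^ 2) / (z * w)) →
        (z + 1) * w ^ 2 + (z ^ 2 + lam * z + 2) * w + (z + 1) ^ 2 = 0 ∧
        (z' + 1) * w' ^ 2 + (z' ^ 2 + lam * z' + 2) * w' + (z' + 1) ^ 2 = 0) := by
  have hA : z' * z = w + 1 := by rw [hz']; field_simp
  have hB : w' * w = z' + 1 := by rw [hw']; field_simp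
  have h1 : ((z' + 1) * w' ^ 2 + (z' ^ 2 + 2) * w' + (z' + 1) ^ 2) / (z' * w')
      = ((z + 1) * w ^ 2 + (z ^ 2 + 2) * w + (z + 1) ^ 2) / (z * w) := by
    rw [div_eq_div_iff (mul_ne_zero hz'ne hw'ne) (mul_ne_zero hz hw)]
    linear_combination (-z + z' - z' * z + z' ^ 2 - w' * z + w' * z') * hA
      + (z - z' - z' * z ^ 2 - z' * w - z' * w * z + z' ^ 2 * z + w' * z + w' * z' * z) * hB
  refine ⟨h1, fun lam hlam => ?_⟩
  subst hlam
  constructor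
  · field_simp
    ring
  · rw [← h1]
    field_simp
    ring
end
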